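/- Let K be a field, V a finite-dimensional K-vector space, k a natural number, and N a nilpotent endomorphism of V with N^{k+1} = 0. Then there exists a weight filtration for N centered at 0, i.e. an increasing family of subspaces W_l ⊆ V (l ∈ ℤ) with W_l = 0 for l < -k, W_l = V for l ≥ k, N(W_l) ⊆ W_{l-2} for all l, and such that for each l ≥ 0 the map induced by N^l from W_l/W_{l-1} to W_{-l}/W_{-l-1} is a linear isomorphism. -/

import Mathlib

/-- `W` is a weight filtration for the nilpotent endomorphism `N` centered at `0`:
an increasing family of subspaces `W l ⊆ V` (`l ∈ ℤ`) with `W l = 0` for `l < -k`,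
`W l = V` for `l ≥ k`, `N (W l) ⊆ W (l - 2)` for all `l`, and such that for each
`l ≥ 0` the map induced by `N ^ l` from `W l / W (l - 1)` to `W (-l) / W (-l - 1)`
is a linear isomorphism (expressed elementwise: `N ^ l` maps `W l` into `W (-l)`,
the induced map is injective and surjective on the quotients). -/
def IsWeightFiltration (K : Type*) [Field K] (V : Type*) [AddCommGroup V] [Module K V]
    (k : ℕ) (N : Module.End K V) (W : ℤ → Submodule K V) : Prop :=
  Monotone W ∧
  (∀ l : ℤ, l < -(k : ℤ) → W l = ⊥) ∧
  (∀ l : ℤ, (k : ℤ) ≤ l → W l = ⊤) ∧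
  (∀ l : ℤ, ∀ x ∈ W l, N x ∈ W (l - 2)) ∧
  (∀ l : ℕ,
    (∀ x ∈ W (l : ℤ), (N ^ l) x ∈ W (-(l : ℤ))) ∧
    (∀ x ∈ W (l : ℤ), (N ^ l) x ∈ W (-(l : ℤ) - 1) → x ∈ W ((l : ℤ) - 1)) ∧
    (∀ y ∈ W (-(l : ℤ)), ∃ x ∈ W (l : ℤ), (N ^ l) x - y ∈ W (-(l : ℤ) - 1)))

theorem exists_weight_filtration_aux (K : Type*) [Field K] :
    ∀ (k : ℕ) (V : Type*) [AddCommGroup V] [Module K V] (N : Module.End K V),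
      N ^ (k + 1) = 0 → ∃ W : ℤ → Submodule K V, IsWeightFiltration K V k N W := by
  intro k
  induction k with
  | zero =>
    intro V _ _ N hN
    rw [pow_one] at hN
    refine ⟨fun l => if 0 ≤ l then ⊤ else ⊥, ?_, ?_, ?_, ?_, ?_⟩
    · intro a b hab
      try dsimp only
      split_ifs <;> first | exact le_top | exact bot_le | exact le_refl _ | (exfalso; omega)
    · intro l hl
      simp only [Nat.cast_zero, neg_zero] at hl
      try dsimp only
      rw [if_neg (by omega)]
    · intro l hl
      simp only [Nat.cast_zero] at hl
      try dsimp only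
      rw [if_pos hl]
    · intro l x _
      have : N x = 0 := by rw [hN]; rfl
      try dsimp only
      split_ifs <;> simp [this]
    · intro l
      have hNl : ∀ x : V, l ≠ 0 → (N ^ l) x = 0 := by
        intro x hl
        obtain ⟨m, rfl⟩ := Nat.exists_eq_add_of_le (Nat.one_le_iff_ne_zero.2 hl)
        rw [pow_add, pow_one, Module.End.mul_apply, hN]
        simp
      refine ⟨?_, ?_, ?_⟩
      · intro x hx
        rcases eq_or_ne l 0 with rfl | hl
        · simpa using hx
        · rw [hNl x hl]; exact zero_mem _
      · intro x hx h
        rcases eq_or_ne l 0 with rfl | hl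
        · simpa using h
        · try dsimp only
          rw [if_pos (by omega : (0:ℤ) ≤ (l:ℤ) - 1)]
          trivial
      · intro y hy
        rcases eq_or_ne l 0 with rfl | hl
        · exact ⟨y, hy, by simp⟩
        · have hy0 : y = 0 := by
            try dsimp only at hy
            rw [if_neg (by omega : ¬ (0:ℤ) ≤ -(l:ℤ)), Submodule.mem_bot] at hy
            exact hy
          refine ⟨0, ?_, ?_⟩
          · try dsimp only
            rw [if_pos (by omega : (0:ℤ) ≤ (l:ℤ))]
            trivial
          · simp [hy0]
  | succ n ih =>
    intro V _ _ N hN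
    classical
    set S : Submodule K V := LinearMap.ker (N ^ (n + 1)) with hSdef
    set T : Submodule K V := LinearMap.range (N ^ (n + 1)) with hTdef
    have hpow_apply : ∀ (j : ℕ) (x : V), (N ^ (j + 1)) x = (N ^ j) (N x) := by
      intro j x
      rw [pow_succ, Module.End.mul_apply]
    have hpow_apply' : ∀ (j : ℕ) (x : V), (N ^ (j + 1)) x = N ((N ^ j) x) := by
      intro j x
      rw [pow_succ', Module.End.mul_apply]
    have hNmem : ∀ x : V, N x ∈ S := by
      intro x
      simp only [hSdef, LinearMap.mem_ker]
      rw [← hpow_apply, hN]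
      simp
    have hTS : T ≤ S := by
      rintro _ ⟨x, rfl⟩
      simp only [hSdef, LinearMap.mem_ker]
      rw [← Module.End.mul_apply, ← pow_add, show (n+1) + (n+1) = n + (n+1+1) by omega,
        pow_add, Module.End.mul_apply, hN]
      simp
    have hNS : ∀ x ∈ S, N x ∈ S := fun x _ => hNmem x
    set Ns : Module.End K S := N.restrict hNS with hNsdef
    have hNs_coe : ∀ x : S, ((Ns x : V)) = N (x : V) := fun _ => rfl
    have hNs_apply : ∀ (x : V) (hx : x ∈ S), Ns ⟨x, hx⟩ = ⟨N x, hNmem x⟩ :=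
      fun _ _ => rfl
    set T' : Submodule K S := T.comap S.subtype with hT'def
    have hT'Ns : T' ≤ T'.comap Ns := by
      rintro ⟨x, hxS⟩ hx
      have hxT : x ∈ T := hx
      show Ns ⟨x, hxS⟩ ∈ T'
      rw [hNs_apply]
      show N x ∈ T
      obtain ⟨u, hu⟩ := hxT
      exact ⟨N u, by rw [← hpow_apply, hpow_apply', hu]⟩
    set N' : Module.End K (S ⧸ T') := Submodule.mapQ T' T' Ns hT'Ns with hN'def
    have hN'apply : ∀ x : S, N' (T'.mkQ x) = T'.mkQ (Ns x) :=
      fun x => Submodule.mapQ_apply T' T' Ns x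
    have hNspow : ∀ (j : ℕ) (x : S), ((Ns ^ j) x : V) = (N ^ j) (x : V) := by
      intro j
      induction j with
      | zero => intro x; simp
      | succ j hj =>
        intro x
        have e1 : (Ns ^ (j + 1)) x = Ns ((Ns ^ j) x) := by
          rw [pow_succ', Module.End.mul_apply]
        rw [e1, hNs_coe, hj, ← hpow_apply']
    have hN'pow : ∀ (j : ℕ) (x : S), (N' ^ j) (T'.mkQ x) = T'.mkQ ((Ns ^ j) x) := by
      intro j
      induction j with
      | zero => intro x; simp
      | succ j hj =>
        intro x
        have e1 : (N' ^ (j + 1)) (T'.mkQ x) = (N' ^ j) (N' (T'.mkQ x)) := by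
          rw [pow_succ, Module.End.mul_apply]
        rw [e1, hN'apply, hj, ← Module.End.mul_apply, ← pow_succ]
    have hN'nil : N' ^ (n + 1) = 0 := by
      apply LinearMap.ext
      intro z
      obtain ⟨x, rfl⟩ := T'.mkQ_surjective z
      rw [hN'pow]
      have hx0 : (Ns ^ (n + 1)) x = 0 := by
        apply Subtype.ext
        rw [hNspow]
        exact x.2
      simp [hx0]
    obtain ⟨W', h'mono, h'bot, h'top, h'step, h'gr⟩ := ih (S ⧸ T') N' hN'nil
    set P : ℤ → Submodule K V := fun l => ((W' l).comap T'.mkQ).map S.subtype with hPdef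
    have mem_P : ∀ (l : ℤ) (x : V), x ∈ P l ↔ ∃ hx : x ∈ S, T'.mkQ ⟨x, hx⟩ ∈ W' l := by
      intro l x
      constructor
      · intro hx
        obtain ⟨y, hy, hyx⟩ := Submodule.mem_map.1 hx
        subst hyx
        exact ⟨y.2, Submodule.mem_comap.1 hy⟩
      · rintro ⟨hx, h⟩
        exact Submodule.mem_map.2 ⟨⟨x, hx⟩, Submodule.mem_comap.2 h, rfl⟩
    have hP_le_S : ∀ l, P l ≤ S := by
      intro l x hx
      obtain ⟨h, _⟩ := (mem_P l x).1 hx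
      exact h
    have hmk_zero : ∀ (x : V) (hx : x ∈ S), x ∈ T → T'.mkQ ⟨x, hx⟩ = 0 := by
      intro x hx hxT
      rw [Submodule.mkQ_apply]
      exact (Submodule.Quotient.mk_eq_zero _).2 hxT
    have hT_le_P : ∀ l, T ≤ P l := by
      intro l x hx
      refine (mem_P l x).2 ⟨hTS hx, ?_⟩
      rw [hmk_zero x (hTS hx) hx]
      exact zero_mem _
    have hP_mono : ∀ a b : ℤ, a ≤ b → P a ≤ P b := fun a b h =>
      Submodule.map_mono (Submodule.comap_mono (h'mono h))
    have hP_le_T : ∀ l : ℤ, l < -(n : ℤ) → P l ≤ T := by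
      intro l hl x hx
      obtain ⟨hxS, hmk⟩ := (mem_P l x).1 hx
      rw [h'bot l hl, Submodule.mem_bot, Submodule.mkQ_apply,
        Submodule.Quotient.mk_eq_zero] at hmk
      exact hmk
    have hpowS : ∀ (j : ℕ) (x : V), x ∈ S → (N ^ j) x ∈ S := by
      intro j x hx
      cases j with
      | zero => simpa using hx
      | succ j =>
        rw [hpow_apply']
        exact hNmem _
    have hkey : ∀ (j : ℕ) (x : V) (hxS : x ∈ S),
        (N' ^ j) (T'.mkQ ⟨x, hxS⟩) = T'.mkQ ⟨(N ^ j) x, hpowS j x hxS⟩ := by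
      intro j x hxS
      rw [hN'pow]
      congr 1
      exact Subtype.ext (hNspow j ⟨x, hxS⟩)
    -- key fact A : N x ∈ P (n - 1) for all x
    have hA : ∀ x : V, N x ∈ P ((n : ℤ) - 1) := by
      intro x
      have hxS : N x ∈ S := hNmem x
      refine (mem_P _ _).2 ⟨hxS, ?_⟩
      refine (h'gr n).2.1 _ (by rw [h'top n le_rfl]; trivial) ?_
      rw [hkey]
      have hT : (N ^ n) (N x) ∈ T := ⟨x, (hpow_apply n x).symm⟩
      rw [hmk_zero _ _ hT]
      exact zero_mem _
    -- key fact B : N kills P (-n)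
    have hB : ∀ x ∈ P (-(n : ℤ)), N x = 0 := by
      intro x hx
      obtain ⟨hxS, hmk⟩ := (mem_P _ _).1 hx
      obtain ⟨z, hz, hzx⟩ := (h'gr n).2.2 _ hmk
      obtain ⟨v, rfl⟩ := T'.mkQ_surjective z
      rw [h'bot _ (by omega), Submodule.mem_bot, sub_eq_zero, hN'pow] at hzx
      have hdiff : (Ns ^ n) v - ⟨x, hxS⟩ ∈ T' := by
        rw [Submodule.mkQ_apply, Submodule.mkQ_apply] at hzx
        exact (Submodule.Quotient.eq _).1 hzx
      have hdiff' : (N ^ n) (v : V) - x ∈ T := by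
        have h2 : ((Ns ^ n) v : V) - x ∈ T := hdiff
        rwa [hNspow] at h2
      obtain ⟨u, hu⟩ := hdiff'
      have hx_eq : x = (N ^ n) (v : V) - (N ^ (n + 1)) u := by
        rw [hu, sub_sub_cancel]
      have hv : (N ^ (n + 1)) (v : V) = 0 := v.2
      rw [hx_eq, map_sub, ← hpow_apply', ← hpow_apply', hv, hN]
      simp
    refine ⟨fun l => if ((n : ℤ) + 1) ≤ l then ⊤ else if l < -((n : ℤ) + 1) then ⊥ else P l,
      ?_, ?_, ?_, ?_, ?_⟩
    · intro a b hab
      try dsimp only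
      split_ifs <;>
        first | exact le_top | exact bot_le | exact le_refl _ | exact hP_mono a b hab |
          (exfalso; omega)
    · intro l hl
      push_cast at hl
      try dsimp only
      rw [if_neg (by omega), if_pos (by omega)]
    · intro l hl
      push_cast at hl
      try dsimp only
      rw [if_pos (by omega)]
    · intro l x hx
      try dsimp only at hx ⊢
      rcases le_or_gt ((n : ℤ) + 3) l with h1 | h1
      · rw [if_pos (by omega)]
        trivial
      rcases le_or_gt ((n : ℤ) + 1) l with h2 | h2
      · -- l = n + 1 or n + 2
        rw [if_neg (by omega), if_neg (by omega)]
        exact hP_mono ((n : ℤ) - 1) (l - 2) (by omega) (hA x)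
      rcases le_or_gt l (-(n : ℤ)) with h3 | h3
      · -- N x = 0
        rw [if_neg (by omega), if_pos (by omega), Submodule.mem_bot]
        rcases lt_or_ge l (-((n : ℤ) + 1)) with h4 | h4
        · rw [if_neg (by omega), if_pos h4, Submodule.mem_bot] at hx
          rw [hx]; simp
        · rw [if_neg (by omega), if_neg (by omega)] at hx
          exact hB x (hP_mono l (-(n : ℤ)) h3 hx)
      · -- -n < l ≤ n : main case
        rw [if_neg (by omega), if_neg (by omega)] at hx
        rw [if_neg (by omega), if_neg (by omega)]
        obtain ⟨hxS, hmk⟩ := (mem_P l x).1 hx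
        refine (mem_P _ _).2 ⟨hNmem x, ?_⟩
        have h2 : N' (T'.mkQ ⟨x, hxS⟩) = T'.mkQ ⟨N x, hNmem x⟩ := by
          rw [hN'apply, hNs_apply]
        exact h2 ▸ h'step l _ hmk
    · intro l
      rcases le_or_gt (n + 2) l with h1 | h1
      · -- l ≥ n + 2 : everything trivial
        obtain ⟨m, rfl⟩ := Nat.exists_eq_add_of_le h1
        have hNl : ∀ x : V, (N ^ (n + 2 + m)) x = 0 := by
          intro x
          rw [pow_add, Module.End.mul_apply, show n + 2 = n + 1 + 1 from rfl, hN]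
          simp
        refine ⟨?_, ?_, ?_⟩
        · intro x hx
          rw [hNl]
          exact zero_mem _
        · intro x _ _
          try dsimp only
          rw [if_pos (by omega)]
          trivial
        · intro y hy
          have hy0 : y = 0 := by
            try dsimp only at hy
            rw [if_neg (by omega), if_pos (by omega), Submodule.mem_bot] at hy
            exact hy
          refine ⟨0, ?_, ?_⟩
          · try dsimp only
            rw [if_pos (show ((n:ℤ) + 1) ≤ ((n + 2 + m : ℕ) : ℤ) by omega)]
            trivial
          · simp [hy0]
      rcases le_or_gt (n + 1) l with h2 | h2
      · -- l = n + 1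
        have hl : l = n + 1 := by omega
        subst hl
        refine ⟨?_, ?_, ?_⟩
        · intro x _
          try dsimp only
          rw [if_neg (by omega), if_neg (by omega)]
          exact hT_le_P _ ⟨x, rfl⟩
        · intro x _ hNx
          try dsimp only at hNx ⊢
          rw [if_neg (by omega), if_pos (by omega), Submodule.mem_bot] at hNx
          rw [if_neg (by omega), if_neg (by omega)]
          refine (mem_P _ _).2 ⟨LinearMap.mem_ker.2 hNx, ?_⟩
          rw [h'top _ (by omega)]
          trivial
        · intro y hy
          try dsimp only at hy ⊢
          rw [if_neg (by omega), if_neg (by omega)] at hy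
          have hyT : y ∈ T := hP_le_T _ (by omega) hy
          obtain ⟨x, hx⟩ := hyT
          refine ⟨x, ?_, ?_⟩
          · try dsimp only
            rw [if_pos (show ((n:ℤ) + 1) ≤ ((n + 1 : ℕ) : ℤ) by omega)]
            trivial
          · try dsimp only
            rw [if_neg (by omega), if_pos (by omega), hx]
            simp
      · -- l ≤ n : main case
        refine ⟨?_, ?_, ?_⟩
        · intro x hx
          try dsimp only at hx ⊢
          rw [if_neg (by omega), if_neg (by omega)] at hx
          rw [if_neg (by omega), if_neg (by omega)]
          obtain ⟨hxS, hmk⟩ := (mem_P _ _).1 hx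
          refine (mem_P _ _).2 ⟨hpowS l x hxS, ?_⟩
          rw [← hkey l x hxS]
          exact (h'gr l).1 _ hmk
        · intro x hx hNx
          try dsimp only at hx hNx ⊢
          rw [if_neg (by omega), if_neg (by omega)] at hx
          rw [if_neg (by omega), if_neg (by omega)] at hNx
          rw [if_neg (by omega), if_neg (by omega)]
          obtain ⟨hxS, hmk⟩ := (mem_P _ _).1 hx
          obtain ⟨hNxS, hNmk⟩ := (mem_P _ _).1 hNx
          refine (mem_P _ _).2 ⟨hxS, ?_⟩
          refine (h'gr l).2.1 _ hmk ?_
          rw [hkey]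
          exact hNmk
        · intro y hy
          try dsimp only at hy ⊢
          rw [if_neg (by omega), if_neg (by omega)] at hy
          obtain ⟨hyS, hymk⟩ := (mem_P _ _).1 hy
          obtain ⟨z, hz, hzy⟩ := (h'gr l).2.2 _ hymk
          obtain ⟨v, rfl⟩ := T'.mkQ_surjective z
          refine ⟨(v : V), ?_, ?_⟩
          · rw [if_neg (by omega), if_neg (by omega)]
            exact (mem_P _ _).2 ⟨v.2, hz⟩
          · rw [if_neg (by omega), if_neg (by omega)]
            have hsub : (N ^ l) (v : V) - y ∈ S := sub_mem (hpowS l _ v.2) hyS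
            refine (mem_P _ _).2 ⟨hsub, ?_⟩
            have heq : T'.mkQ ⟨(N ^ l) (v : V) - y, hsub⟩
                = (N' ^ l) (T'.mkQ v) - T'.mkQ ⟨y, hyS⟩ := by
              rw [hN'pow, ← map_sub]
              congr 1
              apply Subtype.ext
              show (N ^ l) (v : V) - y = ((Ns ^ l) v : V) - y
              rw [hNspow]
            rw [heq]
            exact hzy

theorem exists_weight_filtration (K : Type*) [Field K] (V : Type*) [AddCommGroup V]
    [Module K V] [FiniteDimensional K V] (k : ℕ) (N : Module.End K V)
    (hN : N ^ (k + 1) = 0) :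
    ∃ W : ℤ → Submodule K V, IsWeightFiltration K V k N W :=
  exists_weight_filtration_aux K k V N hN
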